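/- Let G be a finite simple graph on vertex set [n] with [n] = A ⊔ B ⊔ C a partition into nonempty sets such that: the induced subgraph of G on B is a complete graph, no edge of G joins a vertex of A to a vertex of C, and the labels satisfy a < b < c whenever a ∈ A, b ∈ B, c ∈ C. Then for every admissible path P of G, either all vertices of P lie in A ∪ B, or all vertices of P lie in B ∪ C. -/

import Mathlib

/-- A walk is an induced path if it is a path and no two non-consecutive
vertices of the walk are adjacent in `G`. -/
def IsInducedPath {V : Type*} (G : SimpleGraph V) {i j : V} (p : G.Walk i j) :
    Prop :=
  p.IsPath ∧ ∀ a b : Fin p.support.length, (a : ℕ) + 1 < (b : ℕ) →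
    ¬ G.Adj (p.support.get a) (p.support.get b)

/-- A path `P` from `i` to `j` with `i < j` is admissible if it is an induced
path and every interior vertex `u` of `P` satisfies `u < i` or `u > j`. -/
def IsAdmissible {V : Type*} [LinearOrder V] (G : SimpleGraph V) {i j : V}
    (p : G.Walk i j) : Prop :=
  i < j ∧ IsInducedPath G p ∧
    ∀ u ∈ p.support, u ≠ i → u ≠ j → (u < i ∨ j < u)

private lemma list_getElem_eq_of_eq {α : Type*} {l : List α} {i j : ℕ} (h : i = j)
    (hi : i < l.length) : l[i]'hi = l[j]'(h ▸ hi) := by subst h; rfl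

/-- The core combinatorial lemma, stated on lists. -/
private lemma core_lemma {n : ℕ} (G : SimpleGraph (Fin n)) (A B C : Set (Fin n))
    (hcover : A ∪ B ∪ C = Set.univ)
    (hAB : Disjoint A B) (hAC : Disjoint A C) (hBC : Disjoint B C)
    (hBcomplete : ∀ a ∈ B, ∀ b ∈ B, a ≠ b → G.Adj a b)
    (hnoAC : ∀ a ∈ A, ∀ c ∈ C, ¬ G.Adj a c)
    (hABlt : ∀ a ∈ A, ∀ b ∈ B, a < b) (hBClt : ∀ b ∈ B, ∀ c ∈ C, b < c)
    (L : List (Fin n))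
    (hchain : L.Chain' G.Adj) (hnodup : L.Nodup)
    (hind : ∀ a b : ℕ, (ha : a < L.length) → (hb : b < L.length) → a + 1 < b →
      ¬ G.Adj (L[a]'ha) (L[b]'hb))
    (hint : ∀ m : ℕ, (hm : m < L.length) → 0 < m → m + 1 < L.length →
      ((L[m]'hm) < (L[0]'(by omega)) ∧ (L[m]'hm) < (L[L.length-1]'(by omega))) ∨
      ((L[0]'(by omega)) < (L[m]'hm) ∧ (L[L.length-1]'(by omega)) < (L[m]'hm)))
    (ka kc : ℕ) (hka : ka < L.length) (hkc : kc < L.length) (hlt : ka < kc)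
    (hkA : (L[ka]'hka) ∈ A) (hkC : (L[kc]'hkc) ∈ C) : False := by
  classical
  set len := L.length with hlen
  set f : ℕ → Fin n := fun m => L.getD m (L[ka]'hka) with hfdef
  have hfe : ∀ (m : ℕ) (h : m < len), (L[m]'h) = f m :=
    fun m h => (List.getD_eq_getElem L _ h).symm
  -- disjointness helpers
  have hABd : ∀ x : Fin n, x ∈ A → x ∈ B → False :=
    fun x h1 h2 => Set.disjoint_left.mp hAB h1 h2
  have hACd : ∀ x : Fin n, x ∈ A → x ∈ C → False :=
    fun x h1 h2 => Set.disjoint_left.mp hAC h1 h2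
  have hBCd : ∀ x : Fin n, x ∈ B → x ∈ C → False :=
    fun x h1 h2 => Set.disjoint_left.mp hBC h1 h2
  have hABC : ∀ x : Fin n, x ∈ A ∨ x ∈ B ∨ x ∈ C := by
    intro x
    have hx : x ∈ A ∪ B ∪ C := hcover ▸ Set.mem_univ x
    rcases hx with (h | h) | h
    · exact Or.inl h
    · exact Or.inr (Or.inl h)
    · exact Or.inr (Or.inr h)
  -- adjacency of consecutive entries
  have hadjf : ∀ m : ℕ, m + 1 < len → G.Adj (f m) (f (m+1)) := by
    intro m h
    have h2 := List.isChain_iff_getElem.mp hchain m (by omega)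
    simp only [List.get_eq_getElem, hfe] at h2
    exact h2
  -- induced condition in terms of f
  have hindf : ∀ a b : ℕ, a < len → b < len → a + 1 < b → ¬ G.Adj (f a) (f b) := by
    intro a b ha hb hab hadj
    have h2 := hind a b ha hb hab
    simp only [hfe] at h2
    exact h2 hadj
  -- interior condition in terms of f
  have hintf : ∀ m : ℕ, m < len → 0 < m → m + 1 < len →
      (f m < f 0 ∧ f m < f (len-1)) ∨ (f 0 < f m ∧ f (len-1) < f m) := by
    intro m hm h0 h1
    have h2 := hint m hm h0 h1
    simp only [hfe] at h2
    exact h2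
  -- nodup in terms of f
  have hnef : ∀ p q : ℕ, p < len → q < len → p ≠ q → f p ≠ f q := by
    intro p q hp hq hpq h
    have h2 : (L[p]'hp) = L[q]'hq := by simp only [hfe]; exact h
    exact hpq (hnodup.getElem_inj_iff.mp h2)
  -- two B-vertices must be consecutive
  have hBpair : ∀ p q : ℕ, p < len → q < len → p < q → f p ∈ B → f q ∈ B → q = p + 1 := by
    intro p q hp hq hpq hpB hqB
    by_contra h
    have h2 : p + 1 < q := by omega
    exact hindf p q hp hq h2 (hBcomplete _ hpB _ hqB (hnef p q hp hq (by omega)))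
  have hkaAf : f ka ∈ A := hfe ka hka ▸ hkA
  -- t : first C-index ≥ ka
  have hexC : ∃ m, m < len ∧ ka ≤ m ∧ f m ∈ C :=
    ⟨kc, hkc, hlt.le, hfe kc hkc ▸ hkC⟩
  set t := Nat.find hexC with htdef
  obtain ⟨htlen, hkat, htC⟩ := Nat.find_spec hexC
  have htmin : ∀ m, m < t → m < len → ka ≤ m → f m ∉ C := by
    intro m hm h1 h2 hmem
    exact Nat.find_min hexC hm ⟨h1, h2, hmem⟩
  have htkc : t ≤ kc := Nat.find_min' hexC ⟨hkc, hlt.le, by rw [← hfe kc hkc]; exact hkC⟩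
  have hkalt : ka < t := by
    rcases Nat.lt_or_ge ka t with h | h
    · exact h
    · exfalso
      have heq : t = ka := le_antisymm h hkat
      exact hACd _ hkaAf (heq ▸ htC)
  have ht1B : f (t-1) ∈ B := by
    have h1 : t - 1 < len := by omega
    have hnotC : f (t-1) ∉ C := htmin (t-1) (by omega) h1 (by omega)
    have hadj : G.Adj (f (t-1)) (f t) := by
      have h2 := hadjf (t-1) (by omega)
      have e : t - 1 + 1 = t := by omega
      rwa [e] at h2
    have hnotA : f (t-1) ∉ A := fun hA' => hnoAC _ hA' _ htC hadj
    rcases hABC (f (t-1)) with h | h | h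
    · exact absurd h hnotA
    · exact h
    · exact absurd h hnotC
  -- s : last A-index ≤ t-1
  have hkas : ka ≤ t - 1 := by omega
  have hsA' : (fun m => f m ∈ A) (Nat.findGreatest (fun m => f m ∈ A) (t-1)) :=
    Nat.findGreatest_spec (P := fun m => f m ∈ A) hkas hkaAf
  set s := Nat.findGreatest (fun m => f m ∈ A) (t-1) with hsdef
  have hsA : f s ∈ A := hsA'
  have hsle : s ≤ t - 1 := Nat.findGreatest_le _
  have hkas' : ka ≤ s := Nat.le_findGreatest hkas hkaAf
  have hsmax : ∀ m, s < m → m ≤ t - 1 → f m ∉ A :=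
    fun m h1 h2 => Nat.findGreatest_is_greatest h1 h2
  have hslt : s < t - 1 := lt_of_le_of_ne hsle (fun h => hABd _ hsA (by rw [h]; exact ht1B))
  have hs1B : f (s+1) ∈ B := by
    have h1 : s + 1 < len := by omega
    have hnotA : f (s+1) ∉ A := hsmax (s+1) (by omega) (by omega)
    have hnotC : f (s+1) ∉ C := htmin (s+1) (by omega) h1 (by omega)
    rcases hABC (f (s+1)) with h | h | h
    · exact absurd h hnotA
    · exact h
    · exact absurd h hnotC
  -- all B-indices lie in [s+1, t-1]
  have hBrange : ∀ q : ℕ, q < len → f q ∈ B → s + 1 ≤ q ∧ q ≤ t - 1 := by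
    intro q hq hqB
    have hs1len : s + 1 < len := by omega
    have ht1len : t - 1 < len := by omega
    constructor
    · by_contra h
      have h1 : q < s + 1 := by omega
      have h2 := hBpair q (s+1) hq hs1len h1 hqB hs1B
      have hqs : q = s := by omega
      exact hABd _ hsA (hqs ▸ hqB)
    · by_contra h
      have h1 : t - 1 < q := by omega
      have h2 := hBpair (t-1) q ht1len hq h1 ht1B hqB
      have hqt : q = t := by omega
      subst hqt
      exact hBCd _ hqB htC
  have h0len : (0:ℕ) < len := by omega
  have hlast : len - 1 < len := by omega
  have hiNB : f 0 ∉ B := by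
    intro h
    have := (hBrange 0 h0len h).1
    omega
  have hjNB : f (len-1) ∉ B := by
    intro h
    have := (hBrange (len-1) hlast h).2
    omega
  -- the key interior B-vertex
  have hb1 := hintf (s+1) (by omega) (by omega) (by omega)
  rcases hABC (f 0) with hiA | hiB | hiC
  · -- first endpoint in A
    have hib1 : f 0 < f (s+1) := hABlt _ hiA _ hs1B
    have hjb1 : f (len-1) < f (s+1) := by
      rcases hb1 with ⟨h1, _⟩ | ⟨_, h2⟩
      · exact absurd h1 (lt_asymm hib1)
      · exact h2
    rcases hABC (f (len-1)) with hjA | hjB | hjC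
    · -- both endpoints in A : find a B-index after t
      have htlast : t < len - 1 := by
        rcases Nat.lt_or_ge t (len-1) with h | h
        · exact h
        · exfalso
          have heq : t = len - 1 := by omega
          exact hACd _ hjA (heq ▸ htC)
      have huspec' : (fun m => t ≤ m ∧ f m ∈ C)
          (Nat.findGreatest (fun m => t ≤ m ∧ f m ∈ C) (len-1)) :=
        Nat.findGreatest_spec (P := fun m => t ≤ m ∧ f m ∈ C) (le_of_lt htlast) ⟨le_refl t, htC⟩
      set u := Nat.findGreatest (fun m => t ≤ m ∧ f m ∈ C) (len-1) with hudef
      have huspec : t ≤ u ∧ f u ∈ C := huspec'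
      have hule : u ≤ len - 1 := Nat.findGreatest_le _
      have humax : ∀ m, u < m → m ≤ len-1 → ¬(t ≤ m ∧ f m ∈ C) :=
        fun m h1 h2 => Nat.findGreatest_is_greatest h1 h2
      have hune : u < len - 1 :=
        lt_of_le_of_ne hule (fun h => hACd _ hjA (by rw [← h]; exact huspec.2))
      have hu1notC : f (u+1) ∉ C := fun hc => humax (u+1) (by omega) (by omega) ⟨by omega, hc⟩
      have hadj : G.Adj (f u) (f (u+1)) := hadjf u (by omega)
      have hu1notA : f (u+1) ∉ A := fun ha => hnoAC _ ha _ huspec.2 hadj.symm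
      have hu1B : f (u+1) ∈ B := by
        rcases hABC (f (u+1)) with h | h | h
        · exact absurd h hu1notA
        · exact h
        · exact absurd h hu1notC
      have := (hBrange (u+1) (by omega) hu1B).2
      omega
    · exact hjNB hjB
    · exact (lt_asymm hjb1) (hBClt _ hs1B _ hjC)
  · exact hiNB hiB
  · -- first endpoint in C
    have hb1i : f (s+1) < f 0 := hBClt _ hs1B _ hiC
    have hb1j : f (s+1) < f (len-1) := by
      rcases hb1 with ⟨_, h⟩ | ⟨h, _⟩
      · exact h
      · exact absurd h (lt_asymm hb1i)
    rcases hABC (f (len-1)) with hjA | hjB | hjC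
    · exact (lt_asymm hb1j) (hABlt _ hjA _ hs1B)
    · exact hjNB hjB
    · -- both endpoints in C : find a B-index before s
      have hexA : ∃ m, m ≤ s ∧ f m ∈ A := ⟨s, le_refl s, hsA⟩
      set u := Nat.find hexA with hudef
      obtain ⟨hus, huA⟩ := Nat.find_spec hexA
      have humin : ∀ m, m < u → ¬(m ≤ s ∧ f m ∈ A) := fun m hm => Nat.find_min hexA hm
      have hu0 : 0 < u := by
        rcases Nat.eq_zero_or_pos u with h | h
        · exfalso
          apply hACd (f 0) _ hiC
          rw [← h]
          exact huA
        · exact h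
      have hadj : G.Adj (f (u-1)) (f u) := by
        have h2 := hadjf (u-1) (by omega)
        have e : u - 1 + 1 = u := by omega
        rwa [e] at h2
      have hu1notA : f (u-1) ∉ A := fun ha => humin (u-1) (by omega) ⟨by omega, ha⟩
      have hu1notC : f (u-1) ∉ C := fun hc => hnoAC _ huA _ hc hadj.symm
      have hu1B : f (u-1) ∈ B := by
        rcases hABC (f (u-1)) with h | h | h
        · exact absurd h hu1notA
        · exact h
        · exact absurd h hu1notC
      have := (hBrange (u-1) (by omega) hu1B).1
      omega

/-- Let `[n] = A ⊔ B ⊔ C` be a partition into nonempty sets such that the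
induced subgraph on `B` is complete, no edge joins `A` to `C`, and `a < b < c`
whenever `a ∈ A`, `b ∈ B`, `c ∈ C`. Then every admissible path of `G` lies
entirely in `A ∪ B` or entirely in `B ∪ C`. -/
theorem admissible_path_subset {n : ℕ} (G : SimpleGraph (Fin n))
    (A B C : Set (Fin n)) (hA : A.Nonempty) (hB : B.Nonempty) (hC : C.Nonempty)
    (hcover : A ∪ B ∪ C = Set.univ)
    (hAB : Disjoint A B) (hAC : Disjoint A C) (hBC : Disjoint B C)
    (hBcomplete : ∀ a ∈ B, ∀ b ∈ B, a ≠ b → G.Adj a b)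
    (hnoAC : ∀ a ∈ A, ∀ c ∈ C, ¬ G.Adj a c)
    (hABlt : ∀ a ∈ A, ∀ b ∈ B, a < b) (hBClt : ∀ b ∈ B, ∀ c ∈ C, b < c)
    (hAClt : ∀ a ∈ A, ∀ c ∈ C, a < c) :
    ∀ (i j : Fin n) (p : G.Walk i j), IsAdmissible G p →
      (∀ u ∈ p.support, u ∈ A ∪ B) ∨ (∀ u ∈ p.support, u ∈ B ∪ C) := by
  intro i j p hp
  obtain ⟨hij, ⟨hpath, hindraw⟩, hintraw⟩ := hp
  by_contra hcon
  push_neg at hcon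
  obtain ⟨⟨u, huS, huAB⟩, ⟨v, hvS, hvBC⟩⟩ := hcon
  set L := p.support with hL
  have hLne : L ≠ [] := p.support_ne_nil
  have hcover' : ∀ x : Fin n, x ∈ A ∨ x ∈ B ∨ x ∈ C := by
    intro x
    have hx : x ∈ A ∪ B ∪ C := hcover ▸ Set.mem_univ x
    rcases hx with (h | h) | h
    · exact Or.inl h
    · exact Or.inr (Or.inl h)
    · exact Or.inr (Or.inr h)
  have huC : u ∈ C := by
    rcases hcover' u with h | h | h
    · exact absurd (Set.mem_union_left B h) huAB
    · exact absurd (Set.mem_union_right A h) huAB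
    · exact h
  have hvA : v ∈ A := by
    rcases hcover' v with h | h | h
    · exact h
    · exact absurd (Set.mem_union_left C h) hvBC
    · exact absurd (Set.mem_union_right B h) hvBC
  -- basic facts about L
  have hnodup : L.Nodup := hpath.support_nodup
  have hchain : L.Chain' G.Adj := p.isChain_adj_support
  have h0len : 0 < L.length := List.length_pos_iff.mpr hLne
  have hL0 : L[0]'h0len = i := by
    have := p.head_support
    rwa [List.head_eq_getElem_zero] at this
  have hLlast : L[L.length - 1]'(by omega) = j := by
    have := p.getLast_support
    rwa [List.getLast_eq_getElem] at this
  have hind' : ∀ a b : ℕ, (ha : a < L.length) → (hb : b < L.length) → a + 1 < b →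
      ¬ G.Adj (L[a]'ha) (L[b]'hb) := by
    intro a b ha hb hab
    have := hindraw ⟨a, ha⟩ ⟨b, hb⟩ hab
    simpa using this
  have hint' : ∀ m : ℕ, (hm : m < L.length) → 0 < m → m + 1 < L.length →
      ((L[m]'hm) < (L[0]'(by omega)) ∧ (L[m]'hm) < (L[L.length-1]'(by omega))) ∨
      ((L[0]'(by omega)) < (L[m]'hm) ∧ (L[L.length-1]'(by omega)) < (L[m]'hm)) := by
    intro m hm h0 h1
    have hmem : (L[m]'hm) ∈ p.support := List.getElem_mem hm
    have hne0 : (L[m]'hm) ≠ i := by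
      rw [← hL0]
      intro h
      exact absurd (hnodup.getElem_inj_iff.mp h) (by omega)
    have hnel : (L[m]'hm) ≠ j := by
      rw [← hLlast]
      intro h
      exact absurd (hnodup.getElem_inj_iff.mp h) (by omega)
    rcases hintraw _ hmem hne0 hnel with h | h
    · left
      rw [hL0, hLlast]
      exact ⟨h, h.trans hij⟩
    · right
      rw [hL0, hLlast]
      exact ⟨hij.trans h, h⟩
  -- indices of u and v
  obtain ⟨kc, hkc, hgu⟩ := List.mem_iff_getElem.mp huS
  obtain ⟨ka, hka, hgv⟩ := List.mem_iff_getElem.mp hvS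
  have hkaA : (L[ka]'hka) ∈ A := by rw [hgv]; exact hvA
  have hkcC : (L[kc]'hkc) ∈ C := by rw [hgu]; exact huC
  have hne : ka ≠ kc := by
    intro h
    subst h
    exact Set.disjoint_left.mp hAC hkaA hkcC
  rcases Nat.lt_or_ge ka kc with hlt | hge
  · exact core_lemma G A B C hcover hAB hAC hBC hBcomplete hnoAC hABlt hBClt
      L hchain hnodup hind' hint' ka kc hka hkc hlt hkaA hkcC
  · -- reversed case
    have hlt' : kc < ka := by omega
    have hMlen : L.reverse.length = L.length := List.length_reverse (as := L)
    have hchainM : L.reverse.Chain' G.Adj := by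
      rw [List.Chain', List.isChain_reverse]
      exact hchain.imp (fun a b h => h.symm)
    have hnodupM : L.reverse.Nodup := List.nodup_reverse.mpr hnodup
    have hindM : ∀ a b : ℕ, (ha : a < L.reverse.length) → (hb : b < L.reverse.length) →
        a + 1 < b → ¬ G.Adj (L.reverse[a]'ha) (L.reverse[b]'hb) := by
      intro a b ha hb hab hadj
      rw [List.getElem_reverse, List.getElem_reverse] at hadj
      exact hind' (L.length - 1 - b) (L.length - 1 - a) (by omega) (by omega)
        (by omega) hadj.symm
    have hintM : ∀ m : ℕ, (hm : m < L.reverse.length) → 0 < m → m + 1 < L.reverse.length →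
        ((L.reverse[m]'hm) < (L.reverse[0]'(by omega)) ∧
          (L.reverse[m]'hm) < (L.reverse[L.reverse.length-1]'(by omega))) ∨
        ((L.reverse[0]'(by omega)) < (L.reverse[m]'hm) ∧
          (L.reverse[L.reverse.length-1]'(by omega)) < (L.reverse[m]'hm)) := by
      intro m hm h0 h1
      have hm' : m < L.length := by omega
      have h1' : m + 1 < L.length := by omega
      simp only [List.getElem_reverse, List.length_reverse, Nat.sub_zero, Nat.sub_self]
      have h2 := hint' (L.length - 1 - m) (by omega) (by omega) (by omega)
      tauto
    have hkaM : L.length - 1 - kc < L.reverse.length := by omega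
    have hkcM : L.length - 1 - ka < L.reverse.length := by omega
    refine core_lemma G A B C hcover hAB hAC hBC hBcomplete hnoAC hABlt hBClt
      L.reverse hchainM hnodupM hindM hintM (L.length - 1 - ka) (L.length - 1 - kc)
      hkcM hkaM (by omega) ?_ ?_
    · rw [List.getElem_reverse]
      have e : L.length - 1 - (L.length - 1 - ka) = ka := by omega
      simp only [e]
      exact hkaA
    · rw [List.getElem_reverse]
      have e : L.length - 1 - (L.length - 1 - kc) = kc := by omega
      simp only [e]
      exact hkcC
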